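/- Let f : (0,∞) → ℝ be given by f(x) = ln(1+x)/x. Then f is strictly completely decreasing: f(x) > 0 for all x ∈ (0,∞), and (−1)^k f^(k)(x) > 0 for every x ∈ (0,∞) and every integer k ≥ 1. -/

import Mathlib

open Set Filter Topology

noncomputable def Gaux (k : ℕ) (x : ℝ) : ℝ :=
  Real.log (1 + x) - ∑ j ∈ Finset.range k, (x / (1 + x)) ^ (j + 1) / (j + 1)

noncomputable def Faux (k : ℕ) (x : ℝ) : ℝ :=
  (-1) ^ k * (Nat.factorial k : ℝ) * Gaux k x / x ^ (k + 1)

lemma Gaux_hasDerivAt (k : ℕ) {x : ℝ} (hx : -1 < x) :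
    HasDerivAt (Gaux k) (x ^ k / (1 + x) ^ (k + 1)) x := by
  have h1 : (0:ℝ) < 1 + x := by linarith
  have hne : (1 + x) ≠ 0 := h1.ne'
  have hlog : HasDerivAt (fun t : ℝ => Real.log (1 + t)) (1 / (1 + x)) x := by
    have := (Real.hasDerivAt_log hne).comp x ((hasDerivAt_id x).const_add 1)
    simpa [one_div, Function.comp_def] using this
  have hu : HasDerivAt (fun t : ℝ => t / (1 + t)) (1 / (1 + x) ^ 2) x := by
    have := (hasDerivAt_id x).div ((hasDerivAt_id x).const_add 1) hne
    refine this.congr_deriv (Eq.symm ?_)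
    simp only [id]
    ring
  have hsum : HasDerivAt
      (fun t : ℝ => ∑ j ∈ Finset.range k, (t / (1 + t)) ^ (j + 1) / (j + 1))
      (∑ j ∈ Finset.range k, (x / (1 + x)) ^ j * (1 / (1 + x) ^ 2)) x := by
    apply HasDerivAt.fun_sum
    intro j _
    have := ((hu.pow (j + 1)).div_const ((j : ℝ) + 1))
    refine this.congr_deriv (Eq.symm ?_)
    have hj : ((j : ℝ) + 1) ≠ 0 := by positivity
    simp only [Nat.add_sub_cancel, Nat.cast_add, Nat.cast_one]
    field_simp
  have := hlog.sub hsum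
  refine this.congr_deriv (Eq.symm ?_)
  have hune : (x / (1 + x)) ≠ 1 := by
    intro h
    rw [div_eq_one_iff_eq hne] at h
    linarith
  rw [← Finset.sum_mul, geom_sum_eq hune]
  have h2 : x / (1 + x) - 1 = -(1 / (1 + x)) := by field_simp; ring
  rw [div_pow, h2]
  field_simp
  ring

lemma Faux_hasDerivAt (k : ℕ) {x : ℝ} (hx : 0 < x) :
    HasDerivAt (Faux k) (Faux (k + 1) x) x := by
  have hx' : -1 < x := by linarith
  have h1 : (0:ℝ) < 1 + x := by linarith
  have hne : (1 + x) ≠ 0 := h1.ne'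
  have hxne : x ≠ 0 := hx.ne'
  have hG := Gaux_hasDerivAt k hx'
  have hpow : HasDerivAt (fun t : ℝ => t ^ (k + 1)) ((k + 1 : ℕ) * x ^ k) x := by
    simpa using hasDerivAt_pow (k + 1) x
  have hmul : HasDerivAt (fun t : ℝ => (-1) ^ k * (Nat.factorial k : ℝ) * Gaux k t)
      ((-1) ^ k * (Nat.factorial k : ℝ) * (x ^ k / (1 + x) ^ (k + 1))) x :=
    hG.const_mul _
  have := hmul.div hpow (pow_ne_zero _ hxne)
  refine this.congr_deriv (Eq.symm ?_)
  show Faux (k + 1) x = _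
  unfold Faux Gaux
  rw [Finset.sum_range_succ]
  rw [Nat.factorial_succ]
  push_cast
  rw [pow_succ, div_pow]
  have hk1 : ((k : ℝ) + 1) ≠ 0 := by positivity
  field_simp
  ring

lemma Gaux_pos (k : ℕ) {x : ℝ} (hx : 0 < x) : 0 < Gaux k x := by
  have hmono : StrictMonoOn (Gaux k) (Set.Ici 0) := by
    apply strictMonoOn_of_deriv_pos (convex_Ici 0)
    · intro y hy
      have hy' : (-1:ℝ) < y := by simp only [mem_Ici] at hy; linarith
      exact (Gaux_hasDerivAt k hy').differentiableAt.continuousAt.continuousWithinAt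
    · intro y hy
      rw [interior_Ici] at hy
      have hy' : (0:ℝ) < y := hy
      rw [(Gaux_hasDerivAt k (by linarith)).deriv]
      positivity
  have h0 : Gaux k 0 = 0 := by
    simp [Gaux]
  have := hmono self_mem_Ici (mem_Ici.mpr hx.le) hx
  rwa [h0] at this

lemma iter_eq (k : ℕ) : ∀ x ∈ Set.Ioi (0:ℝ),
    iteratedDeriv k (fun t : ℝ => Real.log (1 + t) / t) x = Faux k x := by
  induction k with
  | zero =>
    intro x hx
    simp [Faux, Gaux]
  | succ k ih =>
    intro x hx
    rw [iteratedDeriv_succ]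
    have heq : iteratedDeriv k (fun t : ℝ => Real.log (1 + t) / t) =ᶠ[nhds x] Faux k :=
      Filter.eventuallyEq_of_mem (isOpen_Ioi.mem_nhds hx) ih
    rw [heq.deriv_eq, (Faux_hasDerivAt k (mem_Ioi.mp hx)).deriv]

theorem log_div_strictly_completely_decreasing :
    (∀ x ∈ Set.Ioi (0 : ℝ), 0 < Real.log (1 + x) / x) ∧
    (∀ k : ℕ, 1 ≤ k → ∀ x ∈ Set.Ioi (0 : ℝ),
      0 < (-1 : ℝ) ^ k * iteratedDeriv k (fun t : ℝ => Real.log (1 + t) / t) x) := by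
  constructor
  · intro x hx
    have hx' : (0:ℝ) < x := hx
    exact div_pos (Real.log_pos (by linarith)) hx'
  · intro k _ x hx
    have hx' : (0:ℝ) < x := hx
    rw [iter_eq k x hx]
    have hsq : ((-1:ℝ) ^ k) * ((-1:ℝ) ^ k) = 1 := by
      rw [← pow_add]
      exact Even.neg_one_pow ⟨k, rfl⟩
    unfold Faux
    rw [mul_div_assoc, ← mul_assoc, ← mul_assoc, hsq, one_mul]
    exact mul_pos (Nat.cast_pos.mpr k.factorial_pos)
      (div_pos (Gaux_pos k hx') (pow_pos hx' _))
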